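/- For the Chebyshev-Dickson polynomials T_n over 𝔽₂, gcd(T_m, T_n) = T_{gcd(m,n)} for all m, n ≥ 1. -/

import Mathlib

open Polynomial

/-- The Chebyshev-Dickson polynomials of the first kind over 𝔽₂. -/
noncomputable def Cheb2 : ℕ → Polynomial (ZMod 2)
  | 0 => 0
  | 1 => X
  | n + 2 => X * Cheb2 (n + 1) + Cheb2 n

/-- Fibonacci polynomials over 𝔽₂. -/
noncomputable def Fib2 : ℕ → Polynomial (ZMod 2)
  | 0 => 0
  | 1 => 1
  | n + 2 => X * Fib2 (n + 1) + Fib2 n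

lemma unit_eq_one (p : Polynomial (ZMod 2)) (h : IsUnit p) : p = 1 := by
  rw [Polynomial.isUnit_iff] at h
  obtain ⟨r, hr, rfl⟩ := h
  have : r = 1 := by
    fin_cases r
    · simp at hr
      exact absurd hr (not_isUnit_zero (M₀ := ZMod 2))
    · rfl
  rw [this, map_one]

lemma assoc_eq {a b : Polynomial (ZMod 2)} (h : Associated a b) : a = b := by
  obtain ⟨u, rfl⟩ := h
  rw [unit_eq_one u u.isUnit, mul_one]

lemma dvd_antisymm2 {a b : Polynomial (ZMod 2)} (h1 : a ∣ b) (h2 : b ∣ a) : a = b :=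
  assoc_eq (associated_of_dvd_dvd h1 h2)

lemma gcd_comm2 (a b : Polynomial (ZMod 2)) :
    EuclideanDomain.gcd a b = EuclideanDomain.gcd b a :=
  dvd_antisymm2
    (EuclideanDomain.dvd_gcd (EuclideanDomain.gcd_dvd_right _ _)
      (EuclideanDomain.gcd_dvd_left _ _))
    (EuclideanDomain.dvd_gcd (EuclideanDomain.gcd_dvd_right _ _)
      (EuclideanDomain.gcd_dvd_left _ _))

lemma gcd_add_mul (a b c : Polynomial (ZMod 2)) :
    EuclideanDomain.gcd a (b + a * c) = EuclideanDomain.gcd a b := by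
  apply dvd_antisymm2
  · refine EuclideanDomain.dvd_gcd (EuclideanDomain.gcd_dvd_left _ _) ?_
    have h2 := EuclideanDomain.gcd_dvd_right a (b + a * c)
    have h3 : EuclideanDomain.gcd a (b + a * c) ∣ a * c :=
      (EuclideanDomain.gcd_dvd_left a (b + a * c)).mul_right c
    simpa using dvd_sub h2 h3
  · refine EuclideanDomain.dvd_gcd (EuclideanDomain.gcd_dvd_left _ _) ?_
    exact dvd_add (EuclideanDomain.gcd_dvd_right a b)
      ((EuclideanDomain.gcd_dvd_left a b).mul_right c)

lemma gcd_mul_coprime {a b : Polynomial (ZMod 2)} (h : IsCoprime a b) (c : Polynomial (ZMod 2)) :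
    EuclideanDomain.gcd a (b * c) = EuclideanDomain.gcd a c := by
  apply dvd_antisymm2
  · refine EuclideanDomain.dvd_gcd (EuclideanDomain.gcd_dvd_left _ _) ?_
    have hc : IsCoprime (EuclideanDomain.gcd a (b * c)) b :=
      IsCoprime.of_isCoprime_of_dvd_left h (EuclideanDomain.gcd_dvd_left _ _)
    exact hc.dvd_of_dvd_mul_left (EuclideanDomain.gcd_dvd_right a (b * c))
  · exact EuclideanDomain.dvd_gcd (EuclideanDomain.gcd_dvd_left _ _)
      ((EuclideanDomain.gcd_dvd_right a c).mul_left b)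

lemma fib2_add (m n : ℕ) :
    Fib2 (m + n + 1) = Fib2 (m + 1) * Fib2 (n + 1) + Fib2 m * Fib2 n := by
  induction m using Nat.twoStepInduction with
  | zero => simp [Fib2]
  | one =>
    rw [show 1 + n + 1 = n + 2 by ring]
    show X * Fib2 (n + 1) + Fib2 n = _
    simp [Fib2]
  | more m ih1 ih2 =>
    have e : m + 2 + n + 1 = (m + n + 1) + 2 := by ring
    rw [e, show Fib2 ((m + n + 1) + 2) = X * Fib2 (m + n + 1 + 1) + Fib2 (m + n + 1) from rfl,
      show m + n + 1 + 1 = (m + 1) + n + 1 by ring, ih2, ih1,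
      show Fib2 (m + 2 + 1) = X * Fib2 (m + 2) + Fib2 (m + 1) from rfl,
      show Fib2 (m + 2) = X * Fib2 (m + 1) + Fib2 m from rfl]
    ring

lemma fib2_coprime (n : ℕ) : IsCoprime (Fib2 n) (Fib2 (n + 1)) := by
  induction n with
  | zero =>
    show IsCoprime (0 : Polynomial (ZMod 2)) 1
    exact isCoprime_one_right
  | succ n ih =>
    show IsCoprime (Fib2 (n + 1)) (Fib2 (n + 2))
    rw [show Fib2 (n + 2) = X * Fib2 (n + 1) + Fib2 n from rfl]
    have := (ih.symm).add_mul_left_right X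
    convert this using 1
    · rfl
    ring

lemma gcd_fib2_add (m n : ℕ) :
    EuclideanDomain.gcd (Fib2 m) (Fib2 (n + m)) = EuclideanDomain.gcd (Fib2 m) (Fib2 n) := by
  cases n with
  | zero =>
    simp only [Nat.zero_add]
    rw [show (Fib2 0 : Polynomial (ZMod 2)) = 0 from rfl, EuclideanDomain.gcd_zero_right]
    exact EuclideanDomain.gcd_self _
  | succ n =>
    rw [show n + 1 + m = m + n + 1 by ring, fib2_add, gcd_add_mul,
      gcd_mul_coprime (fib2_coprime m)]

lemma gcd_fib2_add_mul (m n k : ℕ) :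
    EuclideanDomain.gcd (Fib2 m) (Fib2 (n + m * k)) = EuclideanDomain.gcd (Fib2 m) (Fib2 n) := by
  induction k with
  | zero => simp
  | succ k ih =>
    rw [show n + m * (k + 1) = (n + m * k) + m by ring, gcd_fib2_add, ih]

lemma fib2_gcd (m n : ℕ) :
    EuclideanDomain.gcd (Fib2 m) (Fib2 n) = Fib2 (Nat.gcd m n) := by
  induction m, n using Nat.gcd.induction with
  | H0 n => simp [Fib2]
  | H1 m n hm ih =>
    have hn : n = n % m + m * (n / m) := by
      rw [Nat.add_comm, Nat.div_add_mod]
    rw [show EuclideanDomain.gcd (Fib2 m) (Fib2 n)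
        = EuclideanDomain.gcd (Fib2 m) (Fib2 (n % m + m * (n / m))) by rw [← hn],
      gcd_fib2_add_mul, gcd_comm2, ih, Nat.gcd_rec m n]

lemma cheb2_eq (n : ℕ) : Cheb2 n = X * Fib2 n := by
  induction n using Nat.twoStepInduction with
  | zero => simp [Cheb2, Fib2]
  | one => simp [Cheb2, Fib2]
  | more n ih1 ih2 =>
    rw [show Cheb2 (n + 2) = X * Cheb2 (n + 1) + Cheb2 n from rfl,
      show Fib2 (n + 2) = X * Fib2 (n + 1) + Fib2 n from rfl, ih1, ih2]
    ring

lemma gcd_mul_X (a b : Polynomial (ZMod 2)) :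
    EuclideanDomain.gcd (X * a) (X * b) = X * EuclideanDomain.gcd a b := by
  apply dvd_antisymm2
  · have h := EuclideanDomain.gcd_eq_gcd_ab a b
    rw [show X * EuclideanDomain.gcd a b
        = (X * a) * EuclideanDomain.gcdA a b + (X * b) * EuclideanDomain.gcdB a b by
      rw [h]; ring]
    exact dvd_add ((EuclideanDomain.gcd_dvd_left _ _).mul_right _)
      ((EuclideanDomain.gcd_dvd_right _ _).mul_right _)
  · exact EuclideanDomain.dvd_gcd (mul_dvd_mul_left X (EuclideanDomain.gcd_dvd_left _ _))
      (mul_dvd_mul_left X (EuclideanDomain.gcd_dvd_right _ _))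

theorem cheb2_gcd (m n : ℕ) (hm : 1 ≤ m) (hn : 1 ≤ n) :
    EuclideanDomain.gcd (Cheb2 m) (Cheb2 n) = Cheb2 (Nat.gcd m n) := by
  rw [cheb2_eq, cheb2_eq, cheb2_eq, gcd_mul_X, fib2_gcd]
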